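/- arXiv:2102.10776 — 5 statements merged into one kernel-verified Lean document; each statement's English description precedes it below -/
import Mathlib

section
/- If (Q, *) is a binary self-distributive set (shelf), then the ternary operation T(x,y,z) := (x*y)*z is ternary self-distributive. -/
/-- If `(Q, *)` is a shelf (binary self-distributive set), then
`T(x,y,z) := (x*y)*z` is ternary self-distributive. -/
theorem shelf_double_ternary_self_distributive {Q : Type*}
    (op : Q → Q → Q)
    (hsd : ∀ x y z : Q, op (op x y) z = op (op x z) (op y z))
    (T : Q → Q → Q → Q) (hT : ∀ x y z : Q, T x y z = op (op x y) z) :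
    ∀ x y z u v : Q,
      T (T x y z) u v = T (T x u v) (T y u v) (T z u v) := by
  intro x y z u v
  simp only [hT]
  rw [hsd _ _ u, hsd _ _ u, hsd _ _ v, hsd _ _ v, hsd _ _ v]
end

section
/- Let (X,T) be a TSD set and α : X³ → kˣ a ternary 2-cocycle with values in the units of a field k. On the vector space V with basis X⊗X, the linear map c sending (x⊗y)⊗(z⊗w) to α(x,z,w)·α(y,z,w)·(z⊗w)⊗(T(x,z,w)⊗T(y,z,w)) satisfies the braid equation (c⊗1)∘(1⊗c)∘(c⊗1) = (1⊗c)∘(c⊗1)∘(1⊗c) on V⊗V⊗V. -/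
open Finsupp

/-- The α-twisted braiding on the free vector space with basis `X² × X²`,
acting on the first two of three `X²`-factors. -/
noncomputable def tsdBraidFirst {X : Type*} (k : Type*) [Field k]
    (T : X → X → X → X) (α : X → X → X → kˣ) :
    (((X × X) × (X × X) × (X × X)) →₀ k) →ₗ[k]
      (((X × X) × (X × X) × (X × X)) →₀ k) :=
  Finsupp.lift _ k _ fun b =>
    (((α b.1.1 b.2.1.1 b.2.1.2 : k) * (α b.1.2 b.2.1.1 b.2.1.2 : k)) •
      Finsupp.single
        (b.2.1, (T b.1.1 b.2.1.1 b.2.1.2, T b.1.2 b.2.1.1 b.2.1.2), b.2.2) 1)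

/-- The α-twisted braiding acting on the last two of three `X²`-factors. -/
noncomputable def tsdBraidSecond {X : Type*} (k : Type*) [Field k]
    (T : X → X → X → X) (α : X → X → X → kˣ) :
    (((X × X) × (X × X) × (X × X)) →₀ k) →ₗ[k]
      (((X × X) × (X × X) × (X × X)) →₀ k) :=
  Finsupp.lift _ k _ fun b =>
    (((α b.2.1.1 b.2.2.1 b.2.2.2 : k) * (α b.2.1.2 b.2.2.1 b.2.2.2 : k)) •
      Finsupp.single
        (b.1, b.2.2, (T b.2.1.1 b.2.2.1 b.2.2.2, T b.2.1.2 b.2.2.1 b.2.2.2)) 1)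

private lemma lift_single_apply {B : Type*} {k : Type*} [Field k] {M : Type*}
    [AddCommMonoid M] [Module k M] (f : B → M) (b : B) (r : k) :
    Finsupp.lift M k B f (Finsupp.single b r) = r • f b := by
  simp [Finsupp.lift_apply, Finsupp.sum_single_index]

/-- If `(X,T)` is TSD and `α` is a ternary 2-cocycle valued in `kˣ`, then the
α-twisted braiding `c((x⊗y)⊗(z⊗w)) = α(x,z,w)α(y,z,w)·(z⊗w)⊗(T(x,z,w)⊗T(y,z,w))`
satisfies the braid equation `(c⊗1)(1⊗c)(c⊗1) = (1⊗c)(c⊗1)(1⊗c)`. -/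
theorem tsd_cocycle_braiding_satisfies_braid_equation
    {X : Type*} (k : Type*) [Field k]
    (T : X → X → X → X)
    (htsd : ∀ x y z u v : X,
      T (T x y z) u v = T (T x u v) (T y u v) (T z u v))
    (α : X → X → X → kˣ)
    (hα : ∀ x y z u v : X,
      α x y z * α (T x y z) u v =
        α x u v * α (T x u v) (T y u v) (T z u v)) :
    (tsdBraidFirst k T α) ∘ₗ (tsdBraidSecond k T α) ∘ₗ (tsdBraidFirst k T α) =
      (tsdBraidSecond k T α) ∘ₗ (tsdBraidFirst k T α) ∘ₗ
        (tsdBraidSecond k T α) := by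
  refine Finsupp.lhom_ext fun b r => ?_
  obtain ⟨⟨x, y⟩, ⟨z, w⟩, u, v⟩ := b
  simp only [LinearMap.comp_apply, tsdBraidFirst, tsdBraidSecond]
  rw [lift_single_apply, smul_smul, Finsupp.smul_single,
    lift_single_apply, smul_smul, Finsupp.smul_single,
    lift_single_apply, smul_smul, Finsupp.smul_single,
    lift_single_apply, smul_smul, Finsupp.smul_single,
    lift_single_apply, smul_smul, Finsupp.smul_single,
    lift_single_apply, smul_smul, Finsupp.smul_single]
  dsimp only
  rw [htsd x z w u v, htsd y z w u v]
  congr 1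
  have h1 := congrArg (Units.val) (hα x z w u v)
  have h2 := congrArg (Units.val) (hα y z w u v)
  push_cast at h1 h2
  simp only [smul_eq_mul, mul_one]
  have h3 := congrArg₂ (· * ·) h1 h2
  linear_combination r * (α z u v : k) * (α w u v : k) * h3
end

section
/- On the set-theoretic level: if (X,T) is a TSD set, the map R : X² × X² → X² × X² given by R((x,y),(z,w)) = ((z,w),(T(x,z,w),T(y,z,w))) is a set-theoretic solution of the Yang-Baxter equation, i.e. (R×id)(id×R)(R×id) = (id×R)(R×id)(id×R) on (X²)³. -/
/-- If `(X,T)` is TSD, the map `R((x,y),(z,w)) = ((z,w),(T x z w, T y z w))`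
is a set-theoretic solution of the Yang–Baxter equation. -/
theorem tsd_set_theoretic_yang_baxter {X : Type*} (T : X → X → X → X)
    (htsd : ∀ x y z u v : X,
      T (T x y z) u v = T (T x u v) (T y u v) (T z u v))
    (R : (X × X) × (X × X) → (X × X) × (X × X))
    (hR : ∀ p q : X × X,
      R (p, q) = (q, (T p.1 q.1 q.2, T p.2 q.1 q.2)))
    (R₁ R₂ : (X × X) × (X × X) × (X × X) → (X × X) × (X × X) × (X × X))
    (hR₁ : ∀ p q r : X × X, R₁ (p, q, r) = ((R (p, q)).1, (R (p, q)).2, r))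
    (hR₂ : ∀ p q r : X × X, R₂ (p, q, r) = (p, (R (q, r)).1, (R (q, r)).2)) :
    R₁ ∘ R₂ ∘ R₁ = R₂ ∘ R₁ ∘ R₂ := by
  funext ⟨⟨a,b⟩, ⟨c,d⟩, ⟨e,f⟩⟩
  simp only [Function.comp_apply, hR₁, hR₂, hR]
  rw [htsd a, htsd b]
end

section
/- Let H be an involutory Hopf algebra over a field k (S² = id). The quantum heap T : H⊗H⊗H → H, T(x⊗y⊗z) = x·S(y)·z, satisfies the compatibility with comultiplication needed for categorical TSD: in Sweedler notation, T(T(x⊗y⊗z)⊗u⊗v) = T(T(x⊗u^{(1)}⊗v^{(1)}) ⊗ T(y⊗u^{(2)}⊗v^{(2)}) ⊗ T(z⊗u^{(3)}⊗v^{(3)})) for all x,y,z,u,v in H, assuming H is cocommutative. -/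
open Coalgebra TensorProduct

/-- The quantum heap operation `T(x,y,z) = x·S(y)·z` of a Hopf algebra. -/
noncomputable def quantumHeap (k : Type*) [Field k] (H : Type*) [Ring H]
    [HopfAlgebra k H] (x y z : H) : H :=
  x * HopfAlgebra.antipode (R := k) y * z

section Aux
variable {k : Type*} [Field k] {H : Type*} [Ring H] [HopfAlgebra k H]

local notation "S" => HopfAlgebra.antipode (R := k) (A := H)
local notation "ε" => Coalgebra.counit (R := k) (A := H)
local notation "μ" => LinearMap.mul' k H

lemma QH.sum_smul_counit' {a : H} {ι : Type*} (r : Coalgebra.Repr k a ι) :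
    ∑ i ∈ r.index, ε (r.right i) • r.left i = a := by
  have h := congrArg (TensorProduct.rid k H) (Coalgebra.sum_tmul_counit_eq r)
  rw [map_sum] at h
  simp only [_root_.TensorProduct.rid_tmul] at h
  simpa using h

lemma QH.sum_counit_smul' {a : H} {ι : Type*} (r : Coalgebra.Repr k a ι) :
    ∑ i ∈ r.index, ε (r.left i) • r.right i = a := by
  have h := congrArg (TensorProduct.lid k H) (Coalgebra.sum_counit_tmul_eq r)
  rw [map_sum] at h
  simp only [_root_.TensorProduct.lid_tmul] at h
  simpa using h

lemma QH.antipode_smul_expand (a : H) {ι : Type*} (ra : Coalgebra.Repr k a ι) :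
    S a = ∑ i ∈ ra.index, ε (ra.left i) • S (ra.right i) := by
  conv_lhs => rw [← QH.sum_counit_smul' ra]
  rw [map_sum]
  simp only [map_smul]

/-- product of two representations is a representation of the product. -/
noncomputable def QH.Repr.mul {a b : H} {ι κ : Type*} (ra : Coalgebra.Repr k a ι)
    (rb : Coalgebra.Repr k b κ) : Coalgebra.Repr k (a * b) (ι × κ) where
  index := ra.index ×ˢ rb.index
  left := fun pq => ra.left pq.1 * rb.left pq.2
  right := fun pq => ra.right pq.1 * rb.right pq.2
  eq := by
    rw [Finset.sum_product]
    have : Coalgebra.comul (R := k) (a * b) = Coalgebra.comul (R := k) a *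
        Coalgebra.comul (R := k) b := Bialgebra.comul_mul a b
    rw [this, ← ra.eq, ← rb.eq, Finset.sum_mul_sum]
    simp [Algebra.TensorProduct.tmul_mul_tmul]

lemma QH.Ka_lemma {a : H} {ι κ : Type*} (ra : Coalgebra.Repr k a ι)
    (sa : ∀ i : ra.ι, Coalgebra.Repr k (ra.left i) κ) :
    ∑ i ∈ ra.index, ∑ p ∈ (sa i).index,
      (sa i).left p ⊗ₜ[k] ((sa i).right p * S (ra.right i)) = a ⊗ₜ[k] (1 : H) := by
  classical
  set ta : ∀ i : ra.ι, Coalgebra.Repr k (ra.right i) (H × H) := fun i => ℛ k (ra.right i) with hta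
  have h := Coalgebra.sum_tmul_tmul_eq ra sa ta
  have h2 := congrArg (LinearMap.lTensor H (LinearMap.mul' k H ∘ₗ
    LinearMap.lTensor H S)) h
  rw [map_sum, map_sum] at h2
  simp only [map_sum, LinearMap.lTensor_tmul, LinearMap.comp_apply,
    LinearMap.mul'_apply] at h2
  rw [h2]
  have h3 : ∀ i ∈ ra.index, ∑ p ∈ (ta i).index,
      ra.left i ⊗ₜ[k] ((ta i).left p * S ((ta i).right p)) =
      ε (ra.right i) • (ra.left i ⊗ₜ[k] (1 : H)) := by
    intro i _
    rw [← TensorProduct.tmul_sum, HopfAlgebra.sum_mul_antipode_eq_algebraMap_counit (ta i),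
      Algebra.algebraMap_eq_smul_one, TensorProduct.tmul_smul]
  rw [Finset.sum_congr rfl h3]
  simp only [TensorProduct.smul_tmul']
  rw [← TensorProduct.sum_tmul, QH.sum_smul_counit' ra]

lemma QH.expand_SbSa (a b : H) {ι κ ι' κ' : Type*} (ra : Coalgebra.Repr k a ι)
    (rb : Coalgebra.Repr k b κ)
    (sa : ∀ i : ra.ι, Coalgebra.Repr k (ra.left i) ι')
    (sb : ∀ j : rb.ι, Coalgebra.Repr k (rb.left j) κ') :
    S b * S a =
      ∑ j ∈ rb.index, ∑ i ∈ ra.index, ∑ p ∈ (sa i).index, ∑ q ∈ (sb j).index,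
        (S ((sa i).left p * (sb j).left q) *
          ((sa i).right p * (sb j).right q)) *
          (S (rb.right j) * S (ra.right i)) := by
  have ea := QH.antipode_smul_expand (k := k) a ra
  have eb := QH.antipode_smul_expand (k := k) b rb
  rw [ea, eb, Finset.sum_mul_sum]
  refine Finset.sum_congr rfl fun j _ => Finset.sum_congr rfl fun i _ => ?_
  rw [smul_mul_smul_comm, mul_comm (ε (rb.left j)) (ε (ra.left i)),
    ← Bialgebra.counit_mul, Algebra.smul_def,
    ← HopfAlgebra.sum_antipode_mul_eq_algebraMap_counit (QH.Repr.mul (sa i) (sb j))]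
  show (∑ pq ∈ (sa i).index ×ˢ (sb j).index, _) * _ = _
  rw [Finset.sum_product, Finset.sum_mul]
  refine Finset.sum_congr rfl fun p _ => ?_
  rw [Finset.sum_mul]
  rfl

/-- The antipode is an algebra anti-homomorphism. -/
lemma QH.antipode_mul_rev (a b : H) : S (a * b) = S b * S a := by
  classical
  set ra := ℛ k a with hra
  set rb := ℛ k b with hrb
  set sa : ∀ i : ra.ι, Coalgebra.Repr k (ra.left i) (H × H) := fun i => ℛ k (ra.left i) with hsa
  set sb : ∀ j : rb.ι, Coalgebra.Repr k (rb.left j) (H × H) := fun j => ℛ k (rb.left j) with hsb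
  rw [QH.expand_SbSa a b ra rb sa sb]
  rw [Finset.sum_comm]
  have hswap : ∀ i ∈ ra.index,
      (∑ j ∈ rb.index, ∑ p ∈ (sa i).index, ∑ q ∈ (sb j).index,
        (S ((sa i).left p * (sb j).left q) * ((sa i).right p * (sb j).right q)) *
          (S (rb.right j) * S (ra.right i)))
      = ∑ p ∈ (sa i).index, ∑ j ∈ rb.index, ∑ q ∈ (sb j).index,
        (S ((sa i).left p * (sb j).left q) * ((sa i).right p * (sb j).right q)) *
          (S (rb.right j) * S (ra.right i)) := fun i _ => Finset.sum_comm
  rw [Finset.sum_congr rfl hswap]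
  have hstep : ∀ i ∈ ra.index, ∀ p ∈ (sa i).index,
      (∑ j ∈ rb.index, ∑ q ∈ (sb j).index,
        (S ((sa i).left p * (sb j).left q) * ((sa i).right p * (sb j).right q)) *
          (S (rb.right j) * S (ra.right i)))
      = S ((sa i).left p * b) * ((sa i).right p * S (ra.right i)) := by
    intro i _ p _
    set F : H ⊗[k] H →ₗ[k] H := μ ∘ₗ TensorProduct.map
      (S ∘ₗ LinearMap.mulLeft k ((sa i).left p))
      (LinearMap.mulRight k (S (ra.right i)) ∘ₗ LinearMap.mulLeft k ((sa i).right p))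
      with hF
    have e1 : ∀ j ∈ rb.index, ∀ q ∈ (sb j).index,
        (S ((sa i).left p * (sb j).left q) * ((sa i).right p * (sb j).right q)) *
          (S (rb.right j) * S (ra.right i))
        = F ((sb j).left q ⊗ₜ[k] ((sb j).right q * S (rb.right j))) := by
      intro j _ q _
      simp [hF, mul_assoc]
    rw [Finset.sum_congr rfl fun j hj => Finset.sum_congr rfl (e1 j hj)]
    simp only [← map_sum]
    rw [QH.Ka_lemma rb sb]
    simp [hF]
  rw [Finset.sum_congr rfl fun i hi => Finset.sum_congr rfl (hstep i hi)]
  have e2 : ∀ i ∈ ra.index, ∀ p ∈ (sa i).index,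
      S ((sa i).left p * b) * ((sa i).right p * S (ra.right i))
      = (μ ∘ₗ TensorProduct.map (S ∘ₗ LinearMap.mulRight k b)
          (LinearMap.id : H →ₗ[k] H))
        ((sa i).left p ⊗ₜ[k] ((sa i).right p * S (ra.right i))) := by
    intro i _ p _
    simp
  rw [Finset.sum_congr rfl fun i hi => Finset.sum_congr rfl (e2 i hi)]
  simp only [← map_sum]
  rw [QH.Ka_lemma ra sa]
  simp

lemma QH.collapse_lS {w : H} {s : Finset ℕ} {w₁ w₂ w₃ : ℕ → H}
    (hw : TensorProduct.map (Coalgebra.comul (R := k)) LinearMap.id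
        (Coalgebra.comul (R := k) w) =
      ∑ i ∈ s, (w₁ i ⊗ₜ[k] w₂ i) ⊗ₜ[k] w₃ i) :
    ∑ i ∈ s, (w₁ i * S (w₂ i)) ⊗ₜ[k] w₃ i = (1 : H) ⊗ₜ[k] w := by
  have h := congrArg (TensorProduct.map (μ ∘ₗ LinearMap.lTensor H S)
    (LinearMap.id : H →ₗ[k] H)) hw
  rw [map_sum] at h
  simp only [_root_.TensorProduct.map_tmul, LinearMap.comp_apply, LinearMap.lTensor_tmul,
    LinearMap.mul'_apply, LinearMap.id_apply] at h
  rw [← h, ← LinearMap.comp_apply, ← TensorProduct.map_comp, LinearMap.id_comp,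
    LinearMap.comp_assoc, HopfAlgebra.mul_antipode_lTensor_comul]
  have hsplit : TensorProduct.map ((Algebra.linearMap k H) ∘ₗ (Coalgebra.counit (R := k) (A := H)))
        (LinearMap.id : H →ₗ[k] H)
      = TensorProduct.map (Algebra.linearMap k H) LinearMap.id ∘ₗ
        TensorProduct.map (Coalgebra.counit (R := k) (A := H)) LinearMap.id := by
    rw [← TensorProduct.map_comp, LinearMap.id_comp]
  rw [hsplit, LinearMap.comp_apply]
  have hc : TensorProduct.map (Coalgebra.counit (R := k) (A := H)) (LinearMap.id : H →ₗ[k] H)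
      (Coalgebra.comul (R := k) w) = (1 : k) ⊗ₜ[k] w :=
    Coalgebra.rTensor_counit_comul w
  rw [hc]
  simp

lemma QH.collapse_Sr {w : H} {s : Finset ℕ} {w₁ w₂ w₃ : ℕ → H}
    (hw : TensorProduct.map (Coalgebra.comul (R := k)) LinearMap.id
        (Coalgebra.comul (R := k) w) =
      ∑ i ∈ s, (w₁ i ⊗ₜ[k] w₂ i) ⊗ₜ[k] w₃ i) :
    ∑ i ∈ s, (S (w₁ i) * w₂ i) ⊗ₜ[k] w₃ i = (1 : H) ⊗ₜ[k] w := by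
  have h := congrArg (TensorProduct.map (μ ∘ₗ LinearMap.rTensor H S)
    (LinearMap.id : H →ₗ[k] H)) hw
  rw [map_sum] at h
  simp only [_root_.TensorProduct.map_tmul, LinearMap.comp_apply, LinearMap.rTensor_tmul,
    LinearMap.mul'_apply, LinearMap.id_apply] at h
  rw [← h, ← LinearMap.comp_apply, ← TensorProduct.map_comp, LinearMap.id_comp,
    LinearMap.comp_assoc, HopfAlgebra.mul_antipode_rTensor_comul]
  have hsplit : TensorProduct.map ((Algebra.linearMap k H) ∘ₗ (Coalgebra.counit (R := k) (A := H)))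
        (LinearMap.id : H →ₗ[k] H)
      = TensorProduct.map (Algebra.linearMap k H) LinearMap.id ∘ₗ
        TensorProduct.map (Coalgebra.counit (R := k) (A := H)) LinearMap.id := by
    rw [← TensorProduct.map_comp, LinearMap.id_comp]
  rw [hsplit, LinearMap.comp_apply]
  have hc : TensorProduct.map (Coalgebra.counit (R := k) (A := H)) (LinearMap.id : H →ₗ[k] H)
      (Coalgebra.comul (R := k) w) = (1 : k) ⊗ₜ[k] w :=
    Coalgebra.rTensor_counit_comul w
  rw [hc]
  simp

end Aux

/-- For a cocommutative involutory Hopf algebra `H`, the quantum heap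
satisfies the categorical ternary self-distributivity condition: in Sweedler
notation, `T(T(x,y,z),u,v) =
  T(T(x,u⁽¹⁾,v⁽¹⁾), T(y,u⁽²⁾,v⁽²⁾), T(z,u⁽³⁾,v⁽³⁾))`. -/
theorem quantumHeap_categorical_TSD
    {k : Type*} [Field k] {H : Type*} [Ring H] [HopfAlgebra k H]
    (hcocomm : ∀ a : H,
      (TensorProduct.comm k H H) (Coalgebra.comul (R := k) a) =
        Coalgebra.comul (R := k) a)
    (hinv : ∀ a : H,
      HopfAlgebra.antipode (R := k) (HopfAlgebra.antipode (R := k) a) = a)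
    (x y z u v : H)
    (s t : Finset ℕ) (u₁ u₂ u₃ v₁ v₂ v₃ : ℕ → H)
    (hu : TensorProduct.map (Coalgebra.comul (R := k)) LinearMap.id
        (Coalgebra.comul (R := k) u) =
      ∑ i ∈ s, (u₁ i ⊗ₜ[k] u₂ i) ⊗ₜ[k] u₃ i)
    (hv : TensorProduct.map (Coalgebra.comul (R := k)) LinearMap.id
        (Coalgebra.comul (R := k) v) =
      ∑ j ∈ t, (v₁ j ⊗ₜ[k] v₂ j) ⊗ₜ[k] v₃ j) :
    quantumHeap k H (quantumHeap k H x y z) u v =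
      ∑ i ∈ s, ∑ j ∈ t,
        quantumHeap k H
          (quantumHeap k H x (u₁ i) (v₁ j))
          (quantumHeap k H y (u₂ i) (v₂ j))
          (quantumHeap k H z (u₃ i) (v₃ j)) := by
  symm
  simp only [quantumHeap]
  have h1 : ∀ i ∈ s, ∀ j ∈ t,
      x * HopfAlgebra.antipode (R := k) (u₁ i) * v₁ j *
        HopfAlgebra.antipode (R := k)
          (y * HopfAlgebra.antipode (R := k) (u₂ i) * v₂ j) *
        (z * HopfAlgebra.antipode (R := k) (u₃ i) * v₃ j)
      = (LinearMap.mul' k H ∘ₗ TensorProduct.map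
          (LinearMap.mulRight k (u₂ i * HopfAlgebra.antipode (R := k) y * z *
              HopfAlgebra.antipode (R := k) (u₃ i)) ∘ₗ
            LinearMap.mulLeft k (x * HopfAlgebra.antipode (R := k) (u₁ i)))
          (LinearMap.id : H →ₗ[k] H))
        ((v₁ j * HopfAlgebra.antipode (R := k) (v₂ j)) ⊗ₜ[k] v₃ j) := by
    intro i _ j _
    rw [QH.antipode_mul_rev, QH.antipode_mul_rev, hinv]
    simp [mul_assoc]
  rw [Finset.sum_congr rfl fun i hi => Finset.sum_congr rfl (h1 i hi)]
  have h2 : ∀ i ∈ s,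
      (∑ j ∈ t, (LinearMap.mul' k H ∘ₗ TensorProduct.map
          (LinearMap.mulRight k (u₂ i * HopfAlgebra.antipode (R := k) y * z *
              HopfAlgebra.antipode (R := k) (u₃ i)) ∘ₗ
            LinearMap.mulLeft k (x * HopfAlgebra.antipode (R := k) (u₁ i)))
          (LinearMap.id : H →ₗ[k] H))
        ((v₁ j * HopfAlgebra.antipode (R := k) (v₂ j)) ⊗ₜ[k] v₃ j))
      = (LinearMap.mul' k H ∘ₗ TensorProduct.map
          (LinearMap.mulLeft k x)
          (LinearMap.mulRight k v ∘ₗ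
            LinearMap.mulLeft k (HopfAlgebra.antipode (R := k) y * z) ∘ₗ
            (HopfAlgebra.antipode (R := k) (A := H))))
        ((HopfAlgebra.antipode (R := k) (u₁ i) * u₂ i) ⊗ₜ[k] u₃ i) := by
    intro i _
    rw [← map_sum, QH.collapse_lS hv]
    simp [mul_assoc]
  rw [Finset.sum_congr rfl h2, ← map_sum, QH.collapse_Sr hu]
  simp [mul_assoc]
end

section
/- Let X₁,…,Xₙ be coalgebras over k, H a Hopf algebra acting on each Xᵢ (with Xᵢ an H-module coalgebra), and pᵢ : Xᵢ⊗Xᵢ → H coalgebra morphisms satisfying pᵢ(z·Δ(h)) = S(h^{(1)})·pᵢ(z)·h^{(2)} for all z ∈ Xᵢ⊗Xᵢ, h ∈ H. Then the maps T_{ij} : Xᵢ⊗Xⱼ⊗Xⱼ → Xᵢ, T_{ij}(x⊗y₁⊗y₂) = x·pⱼ(y₁⊗y₂), form a compatible system: T_{ik}(T_{ij}(x⊗y₁⊗y₂)⊗z₁⊗z₂) = T_{ij}(T_{ik}(x⊗z₁^{(1)}⊗z₂^{(1)}) ⊗ T_{jk}(y₁⊗z₁^{(2)}⊗z₂^{(2)})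 ⊗ T_{jk}(y₂⊗z₁^{(3)}⊗z₂^{(3)})). -/
open Coalgebra TensorProduct



theorem exists_nat_rep {k : Type*} [CommSemiring k] {M N : Type*}
    [AddCommMonoid M] [Module k M] [AddCommMonoid N] [Module k N]
    (x : M ⊗[k] N) :
    ∃ (s : Finset ℕ) (f : ℕ → M) (g : ℕ → N), x = ∑ n ∈ s, f n ⊗ₜ[k] g n := by
  obtain ⟨S, hS⟩ := TensorProduct.exists_finset x
  classical
  set l := S.toList with hl
  refine ⟨Finset.range l.length, fun n => (l.getD n (0, 0)).1,
    fun n => (l.getD n (0, 0)).2, ?_⟩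
  rw [hS, ← Finset.sum_map_toList S (fun i => i.1 ⊗ₜ[k] i.2),
    ← Fin.sum_univ_fun_getElem (l := l) (f := fun i => i.1 ⊗ₜ[k] i.2),
    ← Fin.sum_univ_eq_sum_range
      (fun n => (l.getD n (0, 0)).1 ⊗ₜ[k] (l.getD n (0, 0)).2) l.length]
  refine Finset.sum_congr rfl fun n _ => ?_
  rw [List.getD_eq_getElem l (0, 0) n.isLt]

/-- The trilinear evaluation map `(h₁ ⊗ h₂) ⊗ h₃ ↦ α (ξ h₁) (γ (h₂ ⊗ h₃))`. -/
noncomputable def auxPhi {k H M : Type*} [CommSemiring k]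
    [AddCommMonoid H] [Module k H] [AddCommMonoid M] [Module k M]
    (α : M →ₗ[k] H →ₗ[k] M) (ξ : H →ₗ[k] M) (γ : H ⊗[k] H →ₗ[k] H) :
    (H ⊗[k] H) ⊗[k] H →ₗ[k] M :=
  TensorProduct.lift α ∘ₗ TensorProduct.map ξ LinearMap.id ∘ₗ
    TensorProduct.map LinearMap.id γ ∘ₗ (TensorProduct.assoc k H H H).toLinearMap

@[simp] lemma auxPhi_tmul {k H M : Type*} [CommSemiring k]
    [AddCommMonoid H] [Module k H] [AddCommMonoid M] [Module k M]
    (α : M →ₗ[k] H →ₗ[k] M) (ξ : H →ₗ[k] M) (γ : H ⊗[k] H →ₗ[k] H)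
    (h₁ h₂ h₃ : H) :
    auxPhi α ξ γ ((h₁ ⊗ₜ[k] h₂) ⊗ₜ[k] h₃) = α (ξ h₁) (γ (h₂ ⊗ₜ[k] h₃)) := by
  simp [auxPhi]

@[simp] lemma auxPhi_assoc_symm_tmul {k H M : Type*} [CommSemiring k]
    [AddCommMonoid H] [Module k H] [AddCommMonoid M] [Module k M]
    (α : M →ₗ[k] H →ₗ[k] M) (ξ : H →ₗ[k] M) (γ : H ⊗[k] H →ₗ[k] H)
    (h₁ : H) (D : H ⊗[k] H) :
    auxPhi α ξ γ ((TensorProduct.assoc k H H H).symm (h₁ ⊗ₜ[k] D)) =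
      α (ξ h₁) (γ D) := by
  simp [auxPhi, LinearEquiv.apply_symm_apply]

/-- The six-linear shuffle-then-evaluate map. -/
noncomputable def auxF {k H M Y : Type*} [CommSemiring k]
    [AddCommMonoid H] [Module k H] [AddCommMonoid M] [Module k M]
    [AddCommMonoid Y] [Module k Y]
    (Φ : (H ⊗[k] H) ⊗[k] H →ₗ[k] M) (P : Y ⊗[k] Y →ₗ[k] H) :
    ((Y ⊗[k] Y) ⊗[k] Y) ⊗[k] ((Y ⊗[k] Y) ⊗[k] Y) →ₗ[k] M :=
  Φ ∘ₗ TensorProduct.map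
      (TensorProduct.map P P ∘ₗ
        (TensorProduct.tensorTensorTensorComm k Y Y Y Y).toLinearMap) P ∘ₗ
    (TensorProduct.tensorTensorTensorComm k (Y ⊗[k] Y) Y (Y ⊗[k] Y) Y).toLinearMap

@[simp] lemma auxF_tmul {k H M Y : Type*} [CommSemiring k]
    [AddCommMonoid H] [Module k H] [AddCommMonoid M] [Module k M]
    [AddCommMonoid Y] [Module k Y]
    (Φ : (H ⊗[k] H) ⊗[k] H →ₗ[k] M) (P : Y ⊗[k] Y →ₗ[k] H)
    (x₁ x₂ x₃ w₁ w₂ w₃ : Y) :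
    auxF Φ P (((x₁ ⊗ₜ[k] x₂) ⊗ₜ[k] x₃) ⊗ₜ[k] ((w₁ ⊗ₜ[k] w₂) ⊗ₜ[k] w₃)) =
      Φ ((P (x₁ ⊗ₜ[k] w₁) ⊗ₜ[k] P (x₂ ⊗ₜ[k] w₂)) ⊗ₜ[k] P (x₃ ⊗ₜ[k] w₃)) := by
  simp [auxF, tensorTensorTensorComm_tmul]


set_option synthInstance.maxHeartbeats 1000000 in
/-- Ternary augmented racks: a family of `H`-module coalgebras `Xᵢ` with
coalgebra morphisms `pᵢ : Xᵢ⊗Xᵢ → H` satisfying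
`pᵢ(z·Δ(h)) = S(h⁽¹⁾)·pᵢ(z)·h⁽²⁾` gives a compatible system of ternary
self-distributive structures `T_{ij}(x⊗y₁⊗y₂) = x·pⱼ(y₁⊗y₂)`. -/
theorem augmented_racks_give_compatible_system
    {k : Type*} [Field k] {H : Type*} [Ring H] [HopfAlgebra k H]
    {ι : Type*} (X : ι → Type*)
    [∀ i, AddCommGroup (X i)] [∀ i, Module k (X i)] [∀ i, Coalgebra k (X i)]
    -- a right `H`-module structure on each `Xᵢ`
    (act : ∀ i, X i →ₗ[k] H →ₗ[k] X i)
    (hact_one : ∀ (i) (x : X i), act i x 1 = x)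
    (hact_mul : ∀ (i) (x : X i) (h h' : H),
      act i (act i x h) h' = act i x (h * h'))
    -- each `Xᵢ` is an `H`-module coalgebra
    (hmod : ∀ (i) (x : X i) (h : H) (s t : Finset ℕ)
      (x₁ x₂ : ℕ → X i) (h₁ h₂ : ℕ → H),
      Coalgebra.comul (R := k) x = ∑ a ∈ s, x₁ a ⊗ₜ[k] x₂ a →
      Coalgebra.comul (R := k) h = ∑ b ∈ t, h₁ b ⊗ₜ[k] h₂ b →
      Coalgebra.comul (R := k) (act i x h) =
        ∑ a ∈ s, ∑ b ∈ t, act i (x₁ a) (h₁ b) ⊗ₜ[k] act i (x₂ a) (h₂ b))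
    (p : ∀ i, (X i ⊗[k] X i) →ₗ[k] H)
    -- each `pᵢ` is a coalgebra morphism
    (hp_comul : ∀ (i) (y₁ y₂ : X i) (s t : Finset ℕ)
      (a₁ a₂ b₁ b₂ : ℕ → X i),
      Coalgebra.comul (R := k) y₁ = ∑ a ∈ s, a₁ a ⊗ₜ[k] a₂ a →
      Coalgebra.comul (R := k) y₂ = ∑ b ∈ t, b₁ b ⊗ₜ[k] b₂ b →
      Coalgebra.comul (R := k) (p i (y₁ ⊗ₜ[k] y₂)) =
        ∑ a ∈ s, ∑ b ∈ t,
          p i (a₁ a ⊗ₜ[k] b₁ b) ⊗ₜ[k] p i (a₂ a ⊗ₜ[k] b₂ b))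
    (hp_counit : ∀ (i) (y₁ y₂ : X i),
      Coalgebra.counit (R := k) (p i (y₁ ⊗ₜ[k] y₂)) =
        Coalgebra.counit (R := k) y₁ * Coalgebra.counit (R := k) y₂)
    -- the augmented-rack (equivariance) condition
    (hp_equiv : ∀ (i) (h : H) (y₁ y₂ : X i) (s : Finset ℕ) (h₁ h₂ : ℕ → H),
      Coalgebra.comul (R := k) h = ∑ n ∈ s, h₁ n ⊗ₜ[k] h₂ n →
      p i (∑ n ∈ s, act i y₁ (h₁ n) ⊗ₜ[k] act i y₂ (h₂ n)) =
        ∑ n ∈ s,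
          HopfAlgebra.antipode (R := k) (h₁ n) * p i (y₁ ⊗ₜ[k] y₂) * h₂ n) :
    -- conclusion: the maps `T_{ij}(x⊗y₁⊗y₂) = x·pⱼ(y₁⊗y₂)` are compatible
    ∀ (i j l : ι) (x : X i) (y₁ y₂ : X j) (z₁ z₂ : X l)
      (s t : Finset ℕ) (z₁₁ z₁₂ z₁₃ z₂₁ z₂₂ z₂₃ : ℕ → X l),
      TensorProduct.map (Coalgebra.comul (R := k)) LinearMap.id
          (Coalgebra.comul (R := k) z₁) =
        ∑ m ∈ s, (z₁₁ m ⊗ₜ[k] z₁₂ m) ⊗ₜ[k] z₁₃ m →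
      TensorProduct.map (Coalgebra.comul (R := k)) LinearMap.id
          (Coalgebra.comul (R := k) z₂) =
        ∑ n ∈ t, (z₂₁ n ⊗ₜ[k] z₂₂ n) ⊗ₜ[k] z₂₃ n →
      act i (act i x (p j (y₁ ⊗ₜ[k] y₂))) (p l (z₁ ⊗ₜ[k] z₂)) =
        ∑ m ∈ s, ∑ n ∈ t,
          act i (act i x (p l (z₁₁ m ⊗ₜ[k] z₂₁ n)))
            (p j (act j y₁ (p l (z₁₂ m ⊗ₜ[k] z₂₂ n)) ⊗ₜ[k]
              act j y₂ (p l (z₁₃ m ⊗ₜ[k] z₂₃ n)))) := by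
  intro i j l x y₁ y₂ z₁ z₂ s t z₁₁ z₁₂ z₁₃ z₂₁ z₂₂ z₂₃ H1 H2
  classical
  -- abbreviations
  set q : H := p j (y₁ ⊗ₜ[k] y₂) with hq
  set g : H := p l (z₁ ⊗ₜ[k] z₂) with hg
  set Φ : (H ⊗[k] H) ⊗[k] H →ₗ[k] X i :=
    auxPhi (act i) (act i x) ((p j) ∘ₗ TensorProduct.map (act j y₁) (act j y₂))
    with hΦdef
  have hΦ : ∀ h₁ h₂ h₃ : H, Φ ((h₁ ⊗ₜ[k] h₂) ⊗ₜ[k] h₃) =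
      act i (act i x h₁) (p j (act j y₁ h₂ ⊗ₜ[k] act j y₂ h₃)) := by
    intro h₁ h₂ h₃; simp [hΦdef]
  -- decompositions of comul z₁, comul z₂ and iterated decompositions
  obtain ⟨s₁, a₁, a₂, hz₁⟩ := exists_nat_rep (Coalgebra.comul (R := k) z₁)
  obtain ⟨s₂, b₁, b₂, hz₂⟩ := exists_nat_rep (Coalgebra.comul (R := k) z₂)
  choose s₁' a₁' a₂' ha₁ using fun u => exists_nat_rep (Coalgebra.comul (R := k) (a₁ u))
  choose s₂' b₁' b₂' hb₁ using fun v => exists_nat_rep (Coalgebra.comul (R := k) (b₁ v))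
  -- Step 2/3: the (Δ⊗id)Δ of z₁ and z₂
  have step2 : TensorProduct.map (Coalgebra.comul (R := k)) LinearMap.id
      (Coalgebra.comul (R := k) z₁) =
      ∑ u ∈ s₁, ∑ u' ∈ s₁' u, (a₁' u u' ⊗ₜ[k] a₂' u u') ⊗ₜ[k] a₂ u := by
    rw [hz₁, map_sum]
    refine Finset.sum_congr rfl fun u _ => ?_
    rw [TensorProduct.map_tmul, LinearMap.id_apply, ha₁ u, TensorProduct.sum_tmul]
  have step3 : TensorProduct.map (Coalgebra.comul (R := k)) LinearMap.id
      (Coalgebra.comul (R := k) z₂) =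
      ∑ v ∈ s₂, ∑ v' ∈ s₂' v, (b₁' v v' ⊗ₜ[k] b₂' v v') ⊗ₜ[k] b₂ v := by
    rw [hz₂, map_sum]
    refine Finset.sum_congr rfl fun v _ => ?_
    rw [TensorProduct.map_tmul, LinearMap.id_apply, hb₁ v, TensorProduct.sum_tmul]
  -- Step 1: the RHS is `auxF Φ (p l)` of the two hypotheses' left sides
  have step1 : ∑ m ∈ s, ∑ n ∈ t,
      act i (act i x (p l (z₁₁ m ⊗ₜ[k] z₂₁ n)))
        (p j (act j y₁ (p l (z₁₂ m ⊗ₜ[k] z₂₂ n)) ⊗ₜ[k]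
          act j y₂ (p l (z₁₃ m ⊗ₜ[k] z₂₃ n)))) =
      auxF Φ (p l)
        ((TensorProduct.map (Coalgebra.comul (R := k)) LinearMap.id
            (Coalgebra.comul (R := k) z₁)) ⊗ₜ[k]
         (TensorProduct.map (Coalgebra.comul (R := k)) LinearMap.id
            (Coalgebra.comul (R := k) z₂))) := by
    rw [H1, H2, TensorProduct.sum_tmul, map_sum]
    refine Finset.sum_congr rfl fun m _ => ?_
    rw [TensorProduct.tmul_sum, map_sum]
    refine Finset.sum_congr rfl fun n _ => ?_
    rw [auxF_tmul, hΦ]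
  -- Step 4: comul g
  have step4 : Coalgebra.comul (R := k) g =
      ∑ u ∈ s₁, ∑ v ∈ s₂,
        p l (a₁ u ⊗ₜ[k] b₁ v) ⊗ₜ[k] p l (a₂ u ⊗ₜ[k] b₂ v) :=
    hp_comul l z₁ z₂ s₁ s₂ a₁ a₂ b₁ b₂ hz₁ hz₂
  have hcc : ∀ u v, Coalgebra.comul (R := k) (p l (a₁ u ⊗ₜ[k] b₁ v)) =
      ∑ u' ∈ s₁' u, ∑ v' ∈ s₂' v,
        p l (a₁' u u' ⊗ₜ[k] b₁' v v') ⊗ₜ[k] p l (a₂' u u' ⊗ₜ[k] b₂' v v') :=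
    fun u v => hp_comul l (a₁ u) (b₁ v) (s₁' u) (s₂' v) _ _ _ _ (ha₁ u) (hb₁ v)
  -- Step 5: (Δ⊗id)Δ g
  have step5 : TensorProduct.map (Coalgebra.comul (R := k)) LinearMap.id
      (Coalgebra.comul (R := k) g) =
      ∑ u ∈ s₁, ∑ v ∈ s₂, ∑ u' ∈ s₁' u, ∑ v' ∈ s₂' v,
        (p l (a₁' u u' ⊗ₜ[k] b₁' v v') ⊗ₜ[k] p l (a₂' u u' ⊗ₜ[k] b₂' v v'))
          ⊗ₜ[k] p l (a₂ u ⊗ₜ[k] b₂ v) := by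
    rw [step4]
    rw [map_sum]
    refine Finset.sum_congr rfl fun u _ => ?_
    rw [map_sum]
    refine Finset.sum_congr rfl fun v _ => ?_
    rw [TensorProduct.map_tmul, LinearMap.id_apply, hcc u v,
      TensorProduct.sum_tmul]
    refine Finset.sum_congr rfl fun u' _ => ?_
    rw [TensorProduct.sum_tmul]
  -- Step 6: identify the two quadruple sums
  have step6 : auxF Φ (p l)
      ((TensorProduct.map (Coalgebra.comul (R := k)) LinearMap.id
          (Coalgebra.comul (R := k) z₁)) ⊗ₜ[k]
       (TensorProduct.map (Coalgebra.comul (R := k)) LinearMap.id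
          (Coalgebra.comul (R := k) z₂))) =
      Φ (TensorProduct.map (Coalgebra.comul (R := k)) LinearMap.id
          (Coalgebra.comul (R := k) g)) := by
    rw [step2, step3, step5]
    simp only [TensorProduct.sum_tmul, TensorProduct.tmul_sum, map_sum, auxF_tmul]
    refine Eq.trans (Finset.sum_congr rfl fun v _ => Finset.sum_comm) ?_
    refine Eq.trans (Finset.sum_comm) ?_
    exact Finset.sum_congr rfl fun u _ => Finset.sum_congr rfl fun v _ =>
      Finset.sum_comm
  -- assemble: reduce to the Hopf-algebra computation
  rw [step1, step6]
  -- coassociativity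
  have hco : TensorProduct.map (Coalgebra.comul (R := k)) LinearMap.id
      (Coalgebra.comul (R := k) g) =
      (TensorProduct.assoc k H H H).symm
        ((Coalgebra.comul (R := k)).lTensor H (Coalgebra.comul (R := k) g)) := by
    rw [← Coalgebra.coassoc_apply (R := k) g, LinearEquiv.symm_apply_apply]
    rfl
  obtain ⟨r, c₁, c₂, hcg⟩ := exists_nat_rep (Coalgebra.comul (R := k) g)
  choose r' d₁ d₂ hd using fun n => exists_nat_rep (Coalgebra.comul (R := k) (c₂ n))
  have hlT : (Coalgebra.comul (R := k)).lTensor H (Coalgebra.comul (R := k) g)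
      = ∑ n ∈ r, c₁ n ⊗ₜ[k] (Coalgebra.comul (R := k) (c₂ n)) := by
    rw [hcg, map_sum]
    simp [LinearMap.lTensor_tmul]
  have step9 : Φ (TensorProduct.map (Coalgebra.comul (R := k)) LinearMap.id
      (Coalgebra.comul (R := k) g)) =
      ∑ n ∈ r, ∑ w ∈ r' n,
        act i (act i x (c₁ n))
          (HopfAlgebra.antipode (R := k) (d₁ n w) * q * d₂ n w) := by
    rw [hco, hlT, map_sum, map_sum]
    refine Finset.sum_congr rfl fun n _ => ?_
    rw [hΦdef, auxPhi_assoc_symm_tmul]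
    rw [LinearMap.comp_apply, hd n, map_sum]
    simp only [TensorProduct.map_tmul]
    rw [hp_equiv j (c₂ n) y₁ y₂ (r' n) (d₁ n) (d₂ n) (hd n), ← hq, map_sum]
  rw [step9]
  -- left side
  rw [hact_mul]
  have hrhs : ∑ n ∈ r, ∑ w ∈ r' n,
      act i (act i x (c₁ n))
        (HopfAlgebra.antipode (R := k) (d₁ n w) * q * d₂ n w) =
      act i x (∑ n ∈ r, ∑ w ∈ r' n,
        c₁ n * (HopfAlgebra.antipode (R := k) (d₁ n w) * q * d₂ n w)) := by
    rw [map_sum]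
    refine Finset.sum_congr rfl fun n _ => ?_
    rw [map_sum]
    exact Finset.sum_congr rfl fun w _ => hact_mul i x _ _
  rw [hrhs]
  congr 1
  -- the purely Hopf-algebraic identity : q * g = ∑ c₁ * (S d₁ * q * d₂)
  set Θ : (H ⊗[k] H) ⊗[k] H →ₗ[k] H :=
    LinearMap.mul' k H ∘ₗ TensorProduct.map
      (LinearMap.mul' k H ∘ₗ
        LinearMap.lTensor H (HopfAlgebra.antipode (R := k)))
      (LinearMap.mulLeft k q) with hΘdef
  have e1 : ∑ n ∈ r, ∑ w ∈ r' n,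
      c₁ n * (HopfAlgebra.antipode (R := k) (d₁ n w) * q * d₂ n w) =
      Θ ((TensorProduct.assoc k H H H).symm
        ((Coalgebra.comul (R := k)).lTensor H (Coalgebra.comul (R := k) g))) := by
    rw [hlT]
    simp only [map_sum]
    refine Finset.sum_congr rfl fun n _ => ?_
    rw [hd n, TensorProduct.tmul_sum]
    simp only [map_sum]
    refine Finset.sum_congr rfl fun w _ => ?_
    rw [TensorProduct.assoc_symm_tmul]
    simp [hΘdef, LinearMap.mul'_apply, mul_assoc]
  have hεg : ∑ n ∈ r, (Coalgebra.counit (R := k) (c₁ n)) • c₂ n = g := by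
    have h2 := Coalgebra.rTensor_counit_comul (R := k) g
    rw [hcg, map_sum] at h2
    simp only [LinearMap.rTensor_tmul] at h2
    have h3 := congrArg (TensorProduct.lid k H) h2
    simpa [map_sum] using h3
  have e2 : Θ ((TensorProduct.assoc k H H H).symm
      ((Coalgebra.comul (R := k)).lTensor H (Coalgebra.comul (R := k) g))) =
      q * g := by
    rw [← hco, hcg, map_sum, map_sum]
    have : ∀ n ∈ r, Θ (TensorProduct.map (Coalgebra.comul (R := k))
        LinearMap.id (c₁ n ⊗ₜ[k] c₂ n)) =
        (Coalgebra.counit (R := k) (c₁ n)) • (q * c₂ n) := by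
      intro n _
      rw [TensorProduct.map_tmul, LinearMap.id_apply, hΘdef]
      simp only [LinearMap.comp_apply, TensorProduct.map_tmul,
        LinearMap.mulLeft_apply]
      rw [LinearMap.mul'_apply, HopfAlgebra.mul_antipode_lTensor_comul_apply,
        ← Algebra.smul_def]
    rw [Finset.sum_congr rfl this]
    have h4 : ∀ n ∈ r, Coalgebra.counit (R := k) (c₁ n) • (q * c₂ n) =
        q * (Coalgebra.counit (R := k) (c₁ n) • c₂ n) :=
      fun n _ => (mul_smul_comm _ _ _).symm
    rw [Finset.sum_congr rfl h4, ← Finset.mul_sum, hεg]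
  rw [e1, e2]
end
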